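/- Let (c_k) be digits with c_k ∈ {0,...,q_k−1} and suppose there exists n with q_n < q where 2 ≤ q_k ≤ q for all k. At the nega-Q-rational point x_0 represented by the two digit sequences ε_1...ε_m (q_{m+1}−1) 0 (q_{m+3}−1) 0 ... and ε_1...ε_{m−1}(ε_m−1) 0 (q_{m+2}−1) 0 (q_{m+4}−1)... with m < n, the jump of f equals 1/q^m − (1/q^m)·Σ_{k≥1}(q_{k+m}−1)/q^k, which is nonzero whenever some q_{k+m} < q. -/

import Mathlib

/-- The nega-q value `Σ_{k≥1} ε_k/(−q)^k` of a digit sequence. -/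
noncomputable def negVal (q0 : ℕ) (e : ℕ → ℕ) : ℝ :=
  ∑' k : ℕ, (e k : ℝ) / (-(q0 : ℝ)) ^ (k + 1)

/-- Digit sequence `ε_1 … ε_m (q_{m+1}−1) 0 (q_{m+3}−1) 0 …` (0-indexed at `m`). -/
def dA (q e : ℕ → ℕ) (m : ℕ) : ℕ → ℕ := fun n =>
  if n ≤ m then e n else if (n - m) % 2 = 1 then q n - 1 else 0

/-- Digit sequence `ε_1 … ε_{m−1} (ε_m−1) 0 (q_{m+2}−1) 0 (q_{m+4}−1) …` (0-indexed at `m`). -/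
def dB (q e : ℕ → ℕ) (m : ℕ) : ℕ → ℕ := fun n =>
  if n < m then e n
  else if n = m then e m - 1
  else if (n - m) % 2 = 1 then 0 else q n - 1

/-- Summability of a digit series with digits bounded by `q0`. -/
lemma aux_summable (q0 : ℕ) (hq0 : 2 ≤ q0) (c : ℕ → ℕ) (hc : ∀ k, c k ≤ q0) :
    Summable (fun k : ℕ => (c k : ℝ) / (-(q0 : ℝ)) ^ (k + 1)) := by
  have hq0R : (1 : ℝ) < (q0 : ℝ) := by exact_mod_cast Nat.lt_of_lt_of_le one_lt_two hq0
  have hq0pos : (0 : ℝ) < (q0 : ℝ) := by linarith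
  apply Summable.of_norm
  have hgeo : Summable (fun k : ℕ => ((q0 : ℝ)⁻¹) ^ k) :=
    summable_geometric_of_lt_one (by positivity) (by
      rw [inv_lt_one_iff₀]; right; exact hq0R)
  refine Summable.of_nonneg_of_le (fun k => norm_nonneg _) (fun k => ?_) hgeo
  rw [norm_div, norm_pow, norm_neg]
  have h1 : ‖(q0 : ℝ)‖ = (q0 : ℝ) := Real.norm_of_nonneg hq0pos.le
  have h2 : ‖(c k : ℝ)‖ = (c k : ℝ) := Real.norm_of_nonneg (Nat.cast_nonneg _)
  rw [h1, h2]
  rw [div_le_iff₀ (by positivity)]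
  have hck : (c k : ℝ) ≤ (q0 : ℝ) := by exact_mod_cast hc k
  calc (c k : ℝ) ≤ (q0 : ℝ) := hck
    _ = ((q0 : ℝ)⁻¹) ^ k * (q0 : ℝ) ^ (k + 1) := by
        rw [pow_succ, inv_pow, inv_mul_cancel_left₀ (by positivity)]

lemma aux_geom_summable (q0 : ℕ) (hq0 : 2 ≤ q0) :
    Summable (fun k : ℕ => ((q0 : ℝ)⁻¹) ^ (k + 1)) := by
  have hq0R : (1 : ℝ) < (q0 : ℝ) := by exact_mod_cast Nat.lt_of_lt_of_le one_lt_two hq0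
  exact (summable_nat_add_iff 1).mpr
    (summable_geometric_of_lt_one (by positivity) (by rw [inv_lt_one_iff₀]; right; exact hq0R))

lemma aux_geom_sum (q0 : ℕ) (hq0 : 2 ≤ q0) :
    ∑' k : ℕ, ((q0 : ℝ) - 1) / (q0 : ℝ) ^ (k + 1) = 1 := by
  have hq0R : (1 : ℝ) < (q0 : ℝ) := by exact_mod_cast Nat.lt_of_lt_of_le one_lt_two hq0
  have hne : (q0 : ℝ) ≠ 0 := by positivity
  have hne1 : (q0 : ℝ) - 1 ≠ 0 := by linarith
  have h : ∀ k : ℕ, ((q0 : ℝ) - 1) / (q0 : ℝ) ^ (k + 1)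
      = (((q0 : ℝ) - 1) / (q0 : ℝ)) * ((q0 : ℝ)⁻¹) ^ k := by
    intro k
    rw [pow_succ]
    field_simp
    rw [← mul_pow, mul_one_div_cancel hne, one_pow]
  rw [tsum_congr h, tsum_mul_left,
    tsum_geometric_of_lt_one (by positivity) (by rw [inv_lt_one_iff₀]; right; exact hq0R)]
  have h2 : (1 : ℝ) - (q0 : ℝ)⁻¹ = ((q0 : ℝ) - 1) / (q0 : ℝ) := by field_simp
  rw [h2]
  field_simp

lemma aux_bound_summable (q0 : ℕ) (hq0 : 2 ≤ q0) :
    Summable (fun k : ℕ => ((q0 : ℝ) - 1) / (q0 : ℝ) ^ (k + 1)) := by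
  refine ((aux_geom_summable q0 hq0).mul_left ((q0 : ℝ) - 1)).congr fun k => ?_
  rw [inv_pow, ← div_eq_mul_inv]

/-- at a nega-Q-rational point `x₀` with the two representations `dA` and `dB`,
the jump of `f` equals `1/q^m − (1/q^m)·Σ_{k≥1} (q_{k+m}−1)/q^k` (here `q^m` is `q0 ^ (m+1)`
since digits are 0-indexed), and it is nonzero whenever some `q_{k+m} < q`. -/
theorem stmt11 (q0 : ℕ) (q : ℕ → ℕ) (hq2 : ∀ k, 2 ≤ q k) (hqq : ∀ k, q k ≤ q0)
    (e : ℕ → ℕ) (he : ∀ k, e k < q k) (m : ℕ) (hem : 1 ≤ e m)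
    (hn : ∃ N, m < N ∧ q N < q0) :
    |negVal q0 (dA q e m) - negVal q0 (dB q e m)|
        = |1 / (q0 : ℝ) ^ (m + 1)
            - (1 / (q0 : ℝ) ^ (m + 1)) *
              ∑' k : ℕ, ((q (m + 1 + k) : ℝ) - 1) / (q0 : ℝ) ^ (k + 1)| ∧
      ((∃ k, q (m + 1 + k) < q0) → negVal q0 (dA q e m) ≠ negVal q0 (dB q e m)) := by
  have hq0 : 2 ≤ q0 := le_trans (hq2 0) (hqq 0)
  have hq0R : (1 : ℝ) < (q0 : ℝ) := by exact_mod_cast Nat.lt_of_lt_of_le one_lt_two hq0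
  have hq0pos : (0 : ℝ) < (q0 : ℝ) := by linarith
  have hqne : ∀ k : ℕ, (-(q0 : ℝ)) ^ (k + 1) ≠ 0 := by
    intro k; apply pow_ne_zero; simp; positivity
  -- digit bounds
  have hdA : ∀ k, dA q e m k ≤ q0 := by
    intro k
    unfold dA
    split_ifs with h1 h2
    · exact le_trans (he k).le (hqq k)
    · exact le_trans (Nat.sub_le _ _) (hqq k)
    · exact Nat.zero_le _
  have hdB : ∀ k, dB q e m k ≤ q0 := by
    intro k
    unfold dB
    split_ifs with h1 h2 h3
    · exact le_trans (he k).le (hqq k)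
    · exact le_trans (Nat.sub_le _ _) (le_trans (he m).le (hqq m))
    · exact Nat.zero_le _
    · exact le_trans (Nat.sub_le _ _) (hqq k)
  have hA := aux_summable q0 hq0 _ hdA
  have hB := aux_summable q0 hq0 _ hdB
  -- the difference function
  set g : ℕ → ℝ := fun k =>
    ((dA q e m k : ℝ) - (dB q e m k : ℝ)) / (-(q0 : ℝ)) ^ (k + 1) with hg
  have hgsum : Summable g := by
    have : g = fun k => (dA q e m k : ℝ) / (-(q0 : ℝ)) ^ (k + 1)
        - (dB q e m k : ℝ) / (-(q0 : ℝ)) ^ (k + 1) := by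
      funext k; rw [hg]; ring
    rw [this]; exact hA.sub hB
  have hD : negVal q0 (dA q e m) - negVal q0 (dB q e m) = ∑' k, g k := by
    unfold negVal
    rw [← Summable.tsum_sub hA hB]
    exact tsum_congr fun k => by rw [hg]; ring
  -- g vanishes below m
  have hg0 : ∀ k < m, g k = 0 := by
    intro k hk
    rw [hg]
    simp only [dA, dB, if_pos hk.le, if_pos hk]
    simp
  -- value at m
  have hgm : g m = 1 / (-(q0 : ℝ)) ^ (m + 1) := by
    have h1 : dA q e m m = e m := by simp [dA]
    have h2 : dB q e m m = e m - 1 := by simp [dB]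
    rw [hg]
    simp only [h1, h2, Nat.cast_sub hem]
    push_cast
    ring
  -- values above m
  have hgj : ∀ j : ℕ, g (j + 1 + m)
      = (1 / (-(q0 : ℝ)) ^ (m + 1)) * (-(((q (m + 1 + j) : ℝ) - 1) / (q0 : ℝ) ^ (j + 1))) := by
    intro j
    have hidx : j + 1 + m = m + 1 + j := by omega
    rw [hidx]
    have hgt : ¬ (m + 1 + j ≤ m) := by omega
    have hgt' : ¬ (m + 1 + j < m) := by omega
    have hne' : ¬ (m + 1 + j = m) := by omega
    have hsub : m + 1 + j - m = j + 1 := by omega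
    have hcast : ((q (m + 1 + j) - 1 : ℕ) : ℝ) = (q (m + 1 + j) : ℝ) - 1 := by
      rw [Nat.cast_sub (le_trans (by norm_num) (hq2 (m + 1 + j)))]; simp
    have hpow : (-(q0 : ℝ)) ^ (m + 1 + j + 1)
        = (-(q0 : ℝ)) ^ (m + 1) * ((-1 : ℝ)) ^ (j + 1) * (q0 : ℝ) ^ (j + 1) := by
      rw [show m + 1 + j + 1 = (m + 1) + (j + 1) by omega, pow_add, neg_pow]
      ring
    have h0 : (-(q0 : ℝ)) ^ (m + 1) ≠ 0 := hqne m
    have h0' : (q0 : ℝ) ^ (j + 1) ≠ 0 := by positivity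
    rcases Nat.even_or_odd (j + 1) with hpar | hpar
    · -- j + 1 even : dA = 0, dB = q - 1
      have hmod : (j + 1) % 2 = 0 := Nat.even_iff.mp hpar
      have hAv : dA q e m (m + 1 + j) = 0 := by
        simp only [dA, if_neg hgt, hsub, hmod]
        norm_num
      have hBv : dB q e m (m + 1 + j) = q (m + 1 + j) - 1 := by
        simp only [dB, if_neg hgt', if_neg hne', hsub, hmod]
        norm_num
      rw [hg]
      simp only [hAv, hBv, hcast, hpow, Even.neg_one_pow hpar]
      field_simp
      simp
    · have hmod : (j + 1) % 2 = 1 := Nat.odd_iff.mp hpar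
      have hAv : dA q e m (m + 1 + j) = q (m + 1 + j) - 1 := by
        simp only [dA, if_neg hgt, hsub, hmod]
        norm_num
      have hBv : dB q e m (m + 1 + j) = 0 := by
        simp only [dB, if_neg hgt', if_neg hne', hsub, hmod]
        norm_num
      rw [hg]
      simp only [hAv, hBv, hcast, hpow, Odd.neg_one_pow hpar]
      field_simp
      ring
  -- the tail series S
  set S : ℝ := ∑' k : ℕ, ((q (m + 1 + k) : ℝ) - 1) / (q0 : ℝ) ^ (k + 1) with hS
  -- compute ∑' g
  have hsum_g : ∑' k, g k = (1 / (-(q0 : ℝ)) ^ (m + 1)) * (1 - S) := by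
    have h1 : (∑ i ∈ Finset.range m, g i) + ∑' i : ℕ, g (i + m) = ∑' k, g k :=
      Summable.sum_add_tsum_nat_add m hgsum
    have h2 : (∑ i ∈ Finset.range m, g i) = 0 :=
      Finset.sum_eq_zero fun i hi => hg0 i (Finset.mem_range.mp hi)
    have hshift : Summable (fun i : ℕ => g (i + m)) :=
      (summable_nat_add_iff m).mpr hgsum
    have h3 : ∑' i : ℕ, g (i + m) = g (0 + m) + ∑' j : ℕ, g (j + 1 + m) :=
      Summable.tsum_eq_zero_add hshift
    have h4 : ∑' j : ℕ, g (j + 1 + m)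
        = (1 / (-(q0 : ℝ)) ^ (m + 1)) * (-S) := by
      rw [tsum_congr hgj, tsum_mul_left, tsum_neg]
    rw [← h1, h2, zero_add, h3, h4]
    simp only [Nat.zero_add, hgm]
    ring
  have habs : |(1 : ℝ) / (-(q0 : ℝ)) ^ (m + 1)| = 1 / (q0 : ℝ) ^ (m + 1) := by
    rw [abs_div, abs_one, abs_pow, abs_neg, abs_of_pos hq0pos]
  constructor
  · rw [hD, hsum_g, abs_mul, habs, show (1 : ℝ) / (q0 : ℝ) ^ (m + 1)
        - 1 / (q0 : ℝ) ^ (m + 1) * S = (1 / (q0 : ℝ) ^ (m + 1)) * (1 - S) by ring,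
      abs_mul, abs_of_pos (by positivity : (0:ℝ) < 1 / (q0 : ℝ) ^ (m + 1))]
  · rintro ⟨k, hk⟩
    have hSlt : S < 1 := by
      have hlt : S < ∑' b : ℕ, ((q0 : ℝ) - 1) / (q0 : ℝ) ^ (b + 1) := by
        rw [hS]
        apply Summable.tsum_lt_tsum_of_nonneg (i := k)
        · intro b
          apply div_nonneg _ (by positivity)
          have : (2 : ℝ) ≤ (q (m + 1 + b) : ℝ) := by exact_mod_cast hq2 (m + 1 + b)
          linarith
        · intro b
          have h' : ((q (m + 1 + b)) : ℝ) ≤ (q0 : ℝ) := by exact_mod_cast hqq (m + 1 + b)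
          gcongr
        · have h' : ((q (m + 1 + k)) : ℝ) < (q0 : ℝ) := by exact_mod_cast hk
          gcongr
        · exact aux_bound_summable q0 hq0
      rw [aux_geom_sum q0 hq0] at hlt
      exact hlt
    intro heq
    have hzero : negVal q0 (dA q e m) - negVal q0 (dB q e m) = 0 := by rw [heq]; ring
    rw [hD, hsum_g] at hzero
    have h1 : (1 : ℝ) / (-(q0 : ℝ)) ^ (m + 1) ≠ 0 :=
      div_ne_zero one_ne_zero (hqne m)
    have h2 : (1 : ℝ) - S ≠ 0 := by linarith
    exact (mul_ne_zero h1 h2) hzero
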